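/- The second Adler–Gel'fand–Dickey map P₁(L)·X = L(XL)_+ − (LX)_+ L factorizes through Radul's maps: for every differential operator E of order ≤ n, W_L(E) = P₁(L)·Θ_L(E), where Θ_L(E) = (E L^{-1})_-. -/

import Mathlib

/-!  A self-contained model of the algebra of pseudodifferential operators on the
circle (or over an abstract differential ring `(R, d)`).

A pseudodifferential operator `A = ∑_{i ≤ N} a_i ∂^i` is encoded by the sequence of
its coefficients `A : ℤ → R` (`A i = a_i`, vanishing for large `i`).  The product is
the standard one, determined by the generalized Leibniz rule
`∂^i ∘ b = ∑_{k ≥ 0} C(i,k) b^{(k)} ∂^{i-k}` with generalized binomial coefficients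
`C(i,k) = Ring.choose i k`. -/

noncomputable section

namespace GD

variable {R : Type} [CommRing R]

/-- Pseudodifferential operators encoded by coefficient sequences:
`A : ℤ → R` stands for `∑ i, (A i) ∂^i`. -/
abbrev PDO (R : Type) := ℤ → R

/-- The product of pseudodifferential operators, with respect to the derivation `d`
of the coefficient ring.  (The `finsum` is a finite sum whenever the two factors
have bounded order, which is the case throughout.) -/
def pmul (d : R → R) (A B : PDO R) : PDO R :=
  fun m => ∑ᶠ p : ℤ × ℕ,
    (Ring.choose p.1 p.2 : ℤ) • (A p.1 * d^[p.2] (B (m - p.1 + (p.2 : ℤ))))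

/-- The single-term operator `a ∂^j`. -/
def term (a : R) (j : ℤ) : PDO R := fun m => if m = j then a else 0

/-- The identity operator `1 = ∂^0`. -/
def one : PDO R := term (1 : R) 0

/-- The purely differential part `A₊` of a pseudodifferential operator
(the part with nonnegative powers of `∂`); `A₋ = A - A₊`. -/
def plus (A : PDO R) : PDO R := fun m => if 0 ≤ m then A m else 0

/-- `d` is a derivation of `R`. -/
def IsDeriv (d : R → R) : Prop :=
  (∀ a b, d (a + b) = d a + d b) ∧ ∀ a b, d (a * b) = d a * b + a * d b

end GD

namespace GDP
open GD Finset

variable {R : Type} [CommRing R] {d : R → R}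

/-- bounded above by `N` -/
def Bdd (A : PDO R) (N : ℤ) : Prop := ∀ i : ℤ, N < i → A i = 0

/-- purely differential -/
def Diff (A : PDO R) : Prop := ∀ m : ℤ, m < 0 → A m = 0

lemma d_zero (hd : IsDeriv d) : d 0 = 0 := by
  have h := hd.1 0 0
  rw [add_zero] at h
  exact left_eq_add.mp h

lemma d_one (hd : IsDeriv d) : d 1 = 0 := by
  have h := hd.2 1 1
  rw [mul_one, mul_one, one_mul] at h
  exact left_eq_add.mp h

lemma it_add (hd : IsDeriv d) (k : ℕ) (x y : R) :
    d^[k] (x + y) = d^[k] x + d^[k] y := by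
  induction k generalizing x y with
  | zero => simp
  | succ k ih => simp only [Function.iterate_succ_apply, hd.1, ih]

/-- iterate of `d` as an additive monoid hom -/
def itHom (hd : IsDeriv d) (k : ℕ) : R →+ R := AddMonoidHom.mk' (d^[k]) (it_add hd k)

lemma it_zero (hd : IsDeriv d) (k : ℕ) : d^[k] (0 : R) = 0 := (itHom hd k).map_zero

lemma it_sub (hd : IsDeriv d) (k : ℕ) (x y : R) :
    d^[k] (x - y) = d^[k] x - d^[k] y := (itHom hd k).map_sub x y

lemma it_zsmul (hd : IsDeriv d) (k : ℕ) (z : ℤ) (x : R) :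
    d^[k] (z • x) = z • d^[k] x := map_zsmul (itHom hd k) z x

lemma it_nsmul (hd : IsDeriv d) (k : ℕ) (z : ℕ) (x : R) :
    d^[k] (z • x) = z • d^[k] x := map_nsmul (itHom hd k) z x

lemma it_sum (hd : IsDeriv d) (k : ℕ) {α : Type*} (s : Finset α) (f : α → R) :
    d^[k] (∑ x ∈ s, f x) = ∑ x ∈ s, d^[k] (f x) := map_sum (itHom hd k) f s

lemma it_one (hd : IsDeriv d) {k : ℕ} (hk : k ≠ 0) : d^[k] (1 : R) = 0 := by
  obtain ⟨k', rfl⟩ := Nat.exists_eq_succ_of_ne_zero hk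
  rw [Function.iterate_succ_apply, d_one hd, it_zero hd]

lemma leibniz (hd : IsDeriv d) (n : ℕ) (x y : R) :
    d^[n] (x * y) = ∑ k ∈ range (n + 1), n.choose k • (d^[n - k] x * d^[k] y) := by
  induction n with
  | zero => simp
  | succ n IH =>
    calc
      d^[n + 1] (x * y) =
          d (∑ k ∈ range (n + 1), n.choose k • (d^[n - k] x * d^[k] y)) := by
        rw [Function.iterate_succ_apply', IH]
      _ = (∑ k ∈ range (n + 1), n.choose k • (d^[n - k + 1] x * d^[k] y)) +
          ∑ k ∈ range (n + 1), n.choose k • (d^[n - k] x * d^[k + 1] y) := by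
        rw [show d = d^[1] from (Function.iterate_one d).symm, it_sum hd, ← sum_add_distrib]
        refine sum_congr rfl fun k _ => ?_
        rw [it_nsmul hd, Function.iterate_one, hd.2, smul_add]
        rw [show d (d^[n-k] x) = d^[n-k+1] x from (Function.iterate_succ_apply' d _ x).symm,
          show d (d^[k] y) = d^[k+1] y from (Function.iterate_succ_apply' d _ y).symm]
      _ = (∑ k ∈ range (n + 1), n.choose (k+1) • (d^[n - k] x * d^[k + 1] y)) +
              1 • (d^[n + 1] x * d^[0] y) +
            ∑ k ∈ range (n + 1), n.choose k • (d^[n - k] x * d^[k + 1] y) := ?_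
      _ = ((∑ k ∈ range (n + 1), n.choose k • (d^[n - k] x * d^[k + 1] y)) +
              ∑ k ∈ range (n + 1), n.choose (k+1) • (d^[n - k] x * d^[k + 1] y)) +
            1 • (d^[n + 1] x * d^[0] y) := by
        rw [add_comm, add_assoc]
      _ = (∑ i ∈ range (n + 1),
              (n + 1).choose (i + 1) • (d^[n + 1 - (i + 1)] x * d^[i + 1] y)) +
            1 • (d^[n + 1] x * d^[0] y) := by
        simp_rw [Nat.choose_succ_succ, Nat.succ_sub_succ, add_smul, sum_add_distrib]
      _ = ∑ k ∈ range (n + 1 + 1), (n+1).choose k • (d^[n + 1 - k] x * d^[k] y) := by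
        rw [sum_range_succ' _ (n+1), Nat.choose_zero_right, tsub_zero]
    congr
    refine (sum_range_succ' _ _).trans (congr_arg₂ (· + ·) ?_ ?_)
    · rw [sum_range_succ, Nat.choose_succ_self, zero_smul, add_zero]
      refine sum_congr rfl fun k hk => ?_
      rw [mem_range] at hk
      have h : n - (k + 1) + 1 = n - k := by omega
      rw [h]
    · rw [Nat.choose_zero_right, tsub_zero]

/-- the summand in `pmul` -/
def smd (d : R → R) (A B : PDO R) (m : ℤ) (p : ℤ × ℕ) : R :=
  (Ring.choose p.1 p.2 : ℤ) • (A p.1 * d^[p.2] (B (m - p.1 + (p.2 : ℤ))))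

lemma pmul_apply (A B : PDO R) (m : ℤ) : pmul d A B m = ∑ᶠ p, smd d A B m p := rfl

def grid (Na Nb m : ℤ) : Finset (ℤ × ℕ) :=
  Finset.Icc (m - Nb) Na ×ˢ range ((Na + Nb - m).toNat + 1)

lemma smd_eq_zero (hd : IsDeriv d) {A B : PDO R} {Na Nb : ℤ} (hA : Bdd A Na) (hB : Bdd B Nb)
    {m : ℤ} {p : ℤ × ℕ} (hp : p ∉ grid Na Nb m) : smd d A B m p = 0 := by
  rcases p with ⟨i, k⟩
  by_cases hAi : A i = 0
  · simp [smd, hAi]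
  by_cases hBv : B (m - i + (k : ℤ)) = 0
  · simp [smd, hBv, it_zero hd]
  exfalso
  apply hp
  have h1 : i ≤ Na := le_of_not_gt fun h => hAi (hA i h)
  have h2 : m - i + (k : ℤ) ≤ Nb := le_of_not_gt fun h => hBv (hB _ h)
  simp only [grid, mem_product, mem_Icc, mem_range]
  constructor
  · omega
  · omega

lemma pmul_eq_sum (hd : IsDeriv d) {A B : PDO R} {Na Nb : ℤ} (hA : Bdd A Na) (hB : Bdd B Nb)
    (m : ℤ) {s : Finset (ℤ × ℕ)} (hs : grid Na Nb m ⊆ s) :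
    pmul d A B m = ∑ p ∈ s, smd d A B m p := by
  rw [pmul_apply]
  apply finsum_eq_sum_of_support_subset
  intro p hp
  by_contra h
  exact hp (smd_eq_zero hd hA hB fun hmem => h (hs hmem))

lemma Bdd.sub {A B : PDO R} {N : ℤ} (hA : Bdd A N) (hB : Bdd B N) : Bdd (A - B) N :=
  fun i hi => by show A i - B i = 0; rw [hA i hi, hB i hi, sub_zero]

lemma Bdd.mono {A : PDO R} {N N' : ℤ} (hA : Bdd A N) (h : N ≤ N') : Bdd A N' :=
  fun i hi => hA i (by omega)

lemma Bdd.pmul (hd : IsDeriv d) {A B : PDO R} {Na Nb : ℤ} (hA : Bdd A Na) (hB : Bdd B Nb) :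
    Bdd (pmul d A B) (Na + Nb) := by
  intro m hm
  rw [pmul_eq_sum hd hA hB m (Finset.Subset.refl _)]
  have : Finset.Icc (m - Nb) Na = ∅ := Finset.Icc_eq_empty (by omega)
  rw [grid, this]
  simp

lemma Bdd.plus {A : PDO R} {N : ℤ} (hA : Bdd A N) : Bdd (GD.plus A) N := by
  intro i hi
  simp [GD.plus, hA i hi]

lemma rchoose_zero {i : ℤ} {k : ℕ} (h0 : 0 ≤ i) (h : i < k) : Ring.choose i k = 0 := by
  lift i to ℕ using h0
  rw [Ring.choose_natCast, Nat.choose_eq_zero_of_lt (by exact_mod_cast h), Nat.cast_zero]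

lemma Diff.pmul (hd : IsDeriv d) {A B : PDO R} (hA : Diff A) (hB : Diff B) :
    Diff (pmul d A B) := by
  intro m hm
  rw [pmul_apply]
  apply finsum_eq_zero_of_forall_eq_zero
  rintro ⟨i, k⟩
  rcases lt_or_ge i 0 with hi | hi
  · simp [smd, hA i hi]
  rcases lt_or_ge i (k : ℤ) with hik | hik
  · simp [smd, rchoose_zero hi hik]
  · have : m - i + (k : ℤ) < 0 := by omega
    simp [smd, hB _ this, it_zero hd]

lemma Diff.plus (A : PDO R) : Diff (GD.plus A) := fun m hm => if_neg (by omega)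

lemma plus_eq_self {A : PDO R} (hA : Diff A) : GD.plus A = A := by
  funext m
  by_cases h : 0 ≤ m
  · exact if_pos h
  · rw [GD.plus, if_neg h, hA m (by omega)]

lemma plus_sub (A B : PDO R) : GD.plus (A - B) = GD.plus A - GD.plus B := by
  funext m
  show (if 0 ≤ m then A m - B m else 0) = (if 0 ≤ m then A m else 0) - (if 0 ≤ m then B m else 0)
  split <;> simp

lemma Diff.sub {A B : PDO R} (hA : Diff A) (hB : Diff B) : Diff (A - B) :=
  fun m hm => by show A m - B m = 0; rw [hA m hm, hB m hm, sub_zero]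

lemma pmul_sub_left (hd : IsDeriv d) {A A' B : PDO R} {N Nb : ℤ}
    (hA : Bdd A N) (hA' : Bdd A' N) (hB : Bdd B Nb) :
    pmul d (A - A') B = pmul d A B - pmul d A' B := by
  funext m
  show _ = pmul d A B m - pmul d A' B m
  rw [pmul_eq_sum hd (hA.sub hA') hB m (Finset.Subset.refl _),
    pmul_eq_sum hd hA hB m (Finset.Subset.refl _),
    pmul_eq_sum hd hA' hB m (Finset.Subset.refl _), ← sum_sub_distrib]
  refine sum_congr rfl fun p _ => ?_
  show (Ring.choose p.1 p.2 : ℤ) • ((A p.1 - A' p.1) * _) = _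
  rw [sub_mul, smul_sub]
  rfl

lemma pmul_sub_right (hd : IsDeriv d) {A B B' : PDO R} {Na N : ℤ}
    (hA : Bdd A Na) (hB : Bdd B N) (hB' : Bdd B' N) :
    pmul d A (B - B') = pmul d A B - pmul d A B' := by
  funext m
  show _ = pmul d A B m - pmul d A B' m
  rw [pmul_eq_sum hd hA (hB.sub hB') m (Finset.Subset.refl _),
    pmul_eq_sum hd hA hB m (Finset.Subset.refl _),
    pmul_eq_sum hd hA hB' m (Finset.Subset.refl _), ← sum_sub_distrib]
  refine sum_congr rfl fun p _ => ?_
  show (Ring.choose p.1 p.2 : ℤ) • (A p.1 * d^[p.2] (B _ - B' _)) = _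
  rw [it_sub hd, mul_sub, smul_sub]
  rfl

lemma pmul_one_right (hd : IsDeriv d) (A : PDO R) : pmul d A GD.one = A := by
  funext m
  rw [pmul_apply]
  rw [finsum_eq_single _ (m, (0 : ℕ))]
  · simp [smd, GD.one, GD.term]
  · rintro ⟨i, k⟩ hne
    by_cases hv : m - i + (k : ℤ) = 0
    · have hk : k ≠ 0 := by
        rintro rfl
        exact hne (by rw [show i = m by omega])
      simp [smd, GD.one, GD.term, hv, it_one hd hk]
    · simp [smd, GD.one, GD.term, hv, it_zero hd]

lemma pmul_one_left (hd : IsDeriv d) (A : PDO R) : pmul d GD.one A = A := by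
  funext m
  rw [pmul_apply]
  rw [finsum_eq_single _ ((0 : ℤ), (0 : ℕ))]
  · simp [smd, GD.one, GD.term]
  · rintro ⟨i, k⟩ hne
    by_cases hi : i = 0
    · subst hi
      have hk : k ≠ 0 := fun h => hne (by simp [h])
      simp [smd, Ring.choose_zero_pos ℤ (Nat.pos_of_ne_zero hk)]
    · simp [smd, GD.one, GD.term, hi]

end GDP

namespace GDP
open GD Finset

variable {R : Type} [CommRing R] {d : R → R}

lemma sum_congr_support {α : Type*} [DecidableEq α] {s t : Finset α} {f : α → R}
    (h : ∀ x, f x ≠ 0 → x ∈ s ∧ x ∈ t) : ∑ x ∈ s, f x = ∑ x ∈ t, f x := by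
  have h1 : ∑ x ∈ s ∩ t, f x = ∑ x ∈ s, f x :=
    Finset.sum_subset (Finset.inter_subset_left) (fun x hx hnx => by
      by_contra hf
      exact hnx (Finset.mem_inter.mpr (h x hf)))
  have h2 : ∑ x ∈ s ∩ t, f x = ∑ x ∈ t, f x :=
    Finset.sum_subset (Finset.inter_subset_right) (fun x hx hnx => by
      by_contra hf
      exact hnx (Finset.mem_inter.mpr (h x hf)))
  rw [← h1, h2]

lemma sum_shift (D T : ℕ) (g : ℕ → R) :
    ∑ l ∈ range T, g (D + l) = ∑ c ∈ range (D + T), if D ≤ c then g c else 0 := by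
  induction T with
  | zero =>
    simp only [range_zero, sum_empty, Nat.add_zero]
    exact (Finset.sum_eq_zero (fun c hc => if_neg (by rw [mem_range] at hc; omega))).symm
  | succ T ih =>
    rw [sum_range_succ, ih, show D + (T+1) = (D+T)+1 by omega, sum_range_succ,
      if_pos (by omega)]

lemma key_identity (i j : ℤ) (a c : ℕ) {T : ℕ} (hT : a + c < T) :
    Ring.choose (j + (i - (a : ℤ))) c * Ring.choose i a =
      ∑ k ∈ range T, (if a ≤ k ∧ k - a ≤ c then
        Ring.choose i k * ((k.choose a : ℤ) * Ring.choose j (c - (k - a))) else 0) := by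
  have h1 : ∑ k ∈ range T, (if a ≤ k ∧ k - a ≤ c then
      Ring.choose i k * ((k.choose a : ℤ) * Ring.choose j (c - (k - a))) else 0)
      = ∑ k ∈ Finset.Ico a (a + c + 1),
        Ring.choose i k * ((k.choose a : ℤ) * Ring.choose j (c - (k - a))) := by
    rw [← Finset.sum_subset (show Finset.Ico a (a+c+1) ⊆ range T by
        intro k hk; rw [mem_Ico] at hk; rw [mem_range]; omega)
      (fun k hk hnk => by
        rw [mem_range] at hk; rw [mem_Ico] at hnk
        exact if_neg (by omega))]
    refine Finset.sum_congr rfl fun k hk => ?_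
    rw [mem_Ico] at hk
    exact if_pos (by omega)
  rw [h1, Finset.sum_Ico_eq_sum_range]
  have h2 : ∀ r ∈ range (a + c + 1 - a), Ring.choose i (a + r) * (((a+r).choose a : ℤ) *
      Ring.choose j (c - (a + r - a)))
      = Ring.choose i a * (Ring.choose (i - (a:ℤ)) r * Ring.choose j (c - r)) := by
    intro r _
    have hs := Ring.choose_smul_choose (i : ℤ) (n := a + r) (k := a) (Nat.le_add_right a r)
    rw [nsmul_eq_mul] at hs
    rw [show a + r - a = r by omega] at hs ⊢
    rw [← mul_assoc, mul_comm (Ring.choose i (a+r)) _, hs]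
    ring
  rw [Finset.sum_congr rfl h2, ← Finset.mul_sum, show a + c + 1 - a = c + 1 by omega]
  have h3 : Ring.choose ((i - (a:ℤ)) + j) c =
      ∑ r ∈ range (c+1), Ring.choose (i - (a:ℤ)) r * Ring.choose j (c - r) := by
    rw [Ring.add_choose_eq c (Commute.all _ _)]
    rw [Finset.Nat.sum_antidiagonal_eq_sum_range_succ_mk]
  rw [← h3, add_comm (i - (a:ℤ)) j]
  ring

lemma mem_grid_iff {Na Nb m : ℤ} {p : ℤ × ℕ} :
    p ∈ grid Na Nb m ↔ m - Nb ≤ p.1 ∧ p.1 ≤ Na ∧ p.2 < (Na + Nb - m).toNat + 1 := by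
  rw [grid, Finset.mem_product, Finset.mem_Icc, Finset.mem_range]
  tauto

theorem pmul_assoc (hd : IsDeriv d) {A B C : PDO R} {Na Nb Nc : ℤ}
    (hA : Bdd A Na) (hB : Bdd B Nb) (hC : Bdd C Nc) :
    pmul d (pmul d A B) C = pmul d A (pmul d B C) := by
  have hAB : Bdd (pmul d A B) (Na + Nb) := Bdd.pmul hd hA hB
  have hBC : Bdd (pmul d B C) (Nb + Nc) := Bdd.pmul hd hB hC
  funext m
  set T : ℕ := (Na + Nb + Nc - m).toNat + 1 with hTdef
  have hT1 : Na + Nb + Nc - m < (T : ℤ) := by omega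
  -- LEFT SIDE
  have hLHS : pmul d (pmul d A B) C m
      = ∑ i ∈ Finset.Icc (m - Nb - Nc) Na, ∑ j ∈ Finset.Icc (m - Na - Nc) Nb,
          ∑ a ∈ range T, ∑ c ∈ range T,
          (Ring.choose (j + (i - (a:ℤ))) c * Ring.choose i a) •
            (A i * d^[a] (B j) * d^[c] (C (m + a + c - i - j))) := by
    calc pmul d (pmul d A B) C m
        = ∑ p ∈ Finset.Icc (m - Nc) (Na + Nb) ×ˢ range T, smd d (pmul d A B) C m p := by
          apply pmul_eq_sum hd hAB hC
          intro p hp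
          rw [mem_grid_iff] at hp
          rw [Finset.mem_product, Finset.mem_Icc, Finset.mem_range]
          refine ⟨⟨by omega, by omega⟩, by omega⟩
      _ = ∑ p₁ ∈ Finset.Icc (m - Nc) (Na + Nb), ∑ l ∈ range T,
            smd d (pmul d A B) C m (p₁, l) := Finset.sum_product _ _ _
      _ = ∑ p₁ ∈ Finset.Icc (m - Nc) (Na + Nb), ∑ l ∈ range T,
            ∑ i ∈ Finset.Icc (m - Nb - Nc) Na, ∑ a ∈ range T,
            (Ring.choose p₁ l * Ring.choose i a) •
              (A i * d^[a] (B (p₁ - i + (a:ℤ))) * d^[l] (C (m - p₁ + (l:ℤ)))) := by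
          refine sum_congr rfl fun p₁ hp₁ => sum_congr rfl fun l _ => ?_
          rw [Finset.mem_Icc] at hp₁
          have hsub : grid Na Nb p₁ ⊆ Finset.Icc (m - Nb - Nc) Na ×ˢ range T := by
            intro q hq
            rw [mem_grid_iff] at hq
            rw [Finset.mem_product, Finset.mem_Icc, Finset.mem_range]
            refine ⟨⟨by omega, by omega⟩, by omega⟩
          show (Ring.choose p₁ l : ℤ) • (pmul d A B p₁ * d^[l] (C (m - p₁ + (l:ℤ)))) = _
          rw [pmul_eq_sum hd hA hB p₁ hsub, Finset.sum_product]
          simp only [smd, Finset.sum_mul, Finset.smul_sum, smul_mul_assoc, smul_smul]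
      _ = ∑ l ∈ range T, ∑ p₁ ∈ Finset.Icc (m - Nc) (Na + Nb),
            ∑ i ∈ Finset.Icc (m - Nb - Nc) Na, ∑ a ∈ range T,
            (Ring.choose p₁ l * Ring.choose i a) •
              (A i * d^[a] (B (p₁ - i + (a:ℤ))) * d^[l] (C (m - p₁ + (l:ℤ)))) :=
          Finset.sum_comm
      _ = ∑ l ∈ range T, ∑ i ∈ Finset.Icc (m - Nb - Nc) Na,
            ∑ p₁ ∈ Finset.Icc (m - Nc) (Na + Nb), ∑ a ∈ range T,
            (Ring.choose p₁ l * Ring.choose i a) •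
              (A i * d^[a] (B (p₁ - i + (a:ℤ))) * d^[l] (C (m - p₁ + (l:ℤ)))) :=
          sum_congr rfl fun l _ => Finset.sum_comm
      _ = ∑ i ∈ Finset.Icc (m - Nb - Nc) Na, ∑ l ∈ range T,
            ∑ p₁ ∈ Finset.Icc (m - Nc) (Na + Nb), ∑ a ∈ range T,
            (Ring.choose p₁ l * Ring.choose i a) •
              (A i * d^[a] (B (p₁ - i + (a:ℤ))) * d^[l] (C (m - p₁ + (l:ℤ)))) :=
          Finset.sum_comm
      _ = ∑ i ∈ Finset.Icc (m - Nb - Nc) Na, ∑ l ∈ range T, ∑ a ∈ range T,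
            ∑ p₁ ∈ Finset.Icc (m - Nc) (Na + Nb),
            (Ring.choose p₁ l * Ring.choose i a) •
              (A i * d^[a] (B (p₁ - i + (a:ℤ))) * d^[l] (C (m - p₁ + (l:ℤ)))) :=
          sum_congr rfl fun i _ => sum_congr rfl fun l _ => Finset.sum_comm
      _ = ∑ i ∈ Finset.Icc (m - Nb - Nc) Na, ∑ a ∈ range T, ∑ l ∈ range T,
            ∑ p₁ ∈ Finset.Icc (m - Nc) (Na + Nb),
            (Ring.choose p₁ l * Ring.choose i a) •
              (A i * d^[a] (B (p₁ - i + (a:ℤ))) * d^[l] (C (m - p₁ + (l:ℤ)))) :=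
          sum_congr rfl fun i _ => Finset.sum_comm
      _ = ∑ i ∈ Finset.Icc (m - Nb - Nc) Na, ∑ a ∈ range T, ∑ l ∈ range T,
            ∑ j ∈ Finset.Icc (m - Na - Nc) Nb,
            (Ring.choose (j + (i - (a:ℤ))) l * Ring.choose i a) •
              (A i * d^[a] (B j) * d^[l] (C (m + a + l - i - j))) := by
          refine sum_congr rfl fun i hi => sum_congr rfl fun a _ => sum_congr rfl fun l _ => ?_
          rw [Finset.mem_Icc] at hi
          have step1 : ∑ p₁ ∈ Finset.Icc (m - Nc) (Na + Nb),
              (Ring.choose p₁ l * Ring.choose i a) •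
              (A i * d^[a] (B (p₁ - i + (a:ℤ))) * d^[l] (C (m - p₁ + (l:ℤ))))
              = ∑ j ∈ Finset.Icc (m - Nc - (i - (a:ℤ))) (Na + Nb - (i - (a:ℤ))),
                (Ring.choose (j + (i - (a:ℤ))) l * Ring.choose i a) •
                (A i * d^[a] (B j) * d^[l] (C (m + a + l - i - j))) := by
            refine Finset.sum_nbij' (fun p => p - (i - (a:ℤ))) (fun j => j + (i - (a:ℤ)))
              ?_ ?_ ?_ ?_ ?_
            · intro p hp
              rw [Finset.mem_Icc] at hp ⊢
              omega
            · intro j hj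
              rw [Finset.mem_Icc] at hj ⊢
              omega
            · intro p _; ring
            · intro j _; ring
            · intro p _
              have e1 : p - (i - (a:ℤ)) + (i - (a:ℤ)) = p := by ring
              have e2 : m + (a:ℤ) + (l:ℤ) - i - (p - (i - (a:ℤ))) = m - p + (l:ℤ) := by ring
              have e3 : p - (i - (a:ℤ)) = p - i + (a:ℤ) := by ring
              rw [e1, e2, e3]
          rw [step1]
          refine sum_congr_support fun j hj => ?_
          have hBj : B j ≠ 0 := by
            intro h0
            apply hj
            rw [h0, it_zero hd, mul_zero, zero_mul, smul_zero]
          have hCv : C (m + (a:ℤ) + (l:ℤ) - i - j) ≠ 0 := by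
            intro h0
            apply hj
            rw [h0, it_zero hd, mul_zero, smul_zero]
          have hj1 : j ≤ Nb := by
            by_contra h
            exact hBj (hB j (by omega))
          have hj2 : m + (a:ℤ) + (l:ℤ) - i - j ≤ Nc := by
            by_contra h
            exact hCv (hC _ (by omega))
          rw [Finset.mem_Icc, Finset.mem_Icc]
          refine ⟨⟨by omega, by omega⟩, by omega, by omega⟩
      _ = ∑ i ∈ Finset.Icc (m - Nb - Nc) Na, ∑ a ∈ range T,
            ∑ j ∈ Finset.Icc (m - Na - Nc) Nb, ∑ c ∈ range T,
            (Ring.choose (j + (i - (a:ℤ))) c * Ring.choose i a) •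
              (A i * d^[a] (B j) * d^[c] (C (m + a + c - i - j))) :=
          sum_congr rfl fun i _ => sum_congr rfl fun a _ => Finset.sum_comm
      _ = ∑ i ∈ Finset.Icc (m - Nb - Nc) Na, ∑ j ∈ Finset.Icc (m - Na - Nc) Nb,
            ∑ a ∈ range T, ∑ c ∈ range T,
            (Ring.choose (j + (i - (a:ℤ))) c * Ring.choose i a) •
              (A i * d^[a] (B j) * d^[c] (C (m + a + c - i - j))) :=
          sum_congr rfl fun i _ => Finset.sum_comm
  -- RIGHT SIDE
  have hRHS : pmul d A (pmul d B C) m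
      = ∑ i ∈ Finset.Icc (m - Nb - Nc) Na, ∑ j ∈ Finset.Icc (m - Na - Nc) Nb,
          ∑ a ∈ range T, ∑ c ∈ range T,
          (∑ k ∈ range T, if a ≤ k ∧ k - a ≤ c then
              Ring.choose i k * ((k.choose a : ℤ) * Ring.choose j (c - (k - a))) else 0) •
            (A i * d^[a] (B j) * d^[c] (C (m + a + c - i - j))) := by
    calc pmul d A (pmul d B C) m
        = ∑ p ∈ Finset.Icc (m - Nb - Nc) Na ×ˢ range T, smd d A (pmul d B C) m p := by
          apply pmul_eq_sum hd hA hBC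
          intro p hp
          rw [mem_grid_iff] at hp
          rw [Finset.mem_product, Finset.mem_Icc, Finset.mem_range]
          refine ⟨⟨by omega, by omega⟩, by omega⟩
      _ = ∑ i ∈ Finset.Icc (m - Nb - Nc) Na, ∑ k ∈ range T,
            smd d A (pmul d B C) m (i, k) := Finset.sum_product _ _ _
      _ = ∑ i ∈ Finset.Icc (m - Nb - Nc) Na, ∑ k ∈ range T,
            ∑ j ∈ Finset.Icc (m - Na - Nc) Nb, ∑ l ∈ range T, ∑ s ∈ range (k+1),
            (Ring.choose i k * (Ring.choose j l * (k.choose s : ℤ))) •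
              (A i * (d^[k-s] (B j) * d^[s + l] (C (m - i + k - j + (l:ℤ))))) := by
          refine sum_congr rfl fun i hi => sum_congr rfl fun k hk => ?_
          rw [Finset.mem_Icc] at hi
          rw [mem_range] at hk
          have hsub : grid Nb Nc (m - i + (k:ℤ)) ⊆ Finset.Icc (m - Na - Nc) Nb ×ˢ range T := by
            intro q hq
            rw [mem_grid_iff] at hq
            rw [Finset.mem_product, Finset.mem_Icc, Finset.mem_range]
            refine ⟨⟨by omega, by omega⟩, by omega⟩
          show (Ring.choose i k : ℤ) • (A i * d^[k] (pmul d B C (m - i + (k:ℤ)))) = _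
          rw [pmul_eq_sum hd hB hC _ hsub, Finset.sum_product]
          simp only [smd, it_sum hd, it_zsmul hd, leibniz hd]
          simp only [← Function.iterate_add_apply]
          simp only [Finset.mul_sum, Finset.smul_sum]
          refine sum_congr rfl fun j _ => sum_congr rfl fun l _ => sum_congr rfl fun s _ => ?_
          rw [mul_smul_comm, mul_smul_comm, ← natCast_zsmul, smul_smul, smul_smul]
          congr 1
          ring
      _ = ∑ i ∈ Finset.Icc (m - Nb - Nc) Na, ∑ k ∈ range T,
            ∑ j ∈ Finset.Icc (m - Na - Nc) Nb, ∑ l ∈ range T, ∑ s ∈ range T,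
            (Ring.choose i k * (Ring.choose j l * (k.choose s : ℤ))) •
              (A i * (d^[k-s] (B j) * d^[s + l] (C (m - i + k - j + (l:ℤ))))) := by
          refine sum_congr rfl fun i _ => sum_congr rfl fun k hk =>
            sum_congr rfl fun j _ => sum_congr rfl fun l _ => ?_
          rw [mem_range] at hk
          refine Finset.sum_subset (by rw [Finset.range_subset_range]; omega) fun s _ hs => ?_
          rw [mem_range, not_lt] at hs
          rw [Nat.choose_eq_zero_of_lt (by omega), Nat.cast_zero, mul_zero, mul_zero, zero_smul]
      _ = ∑ i ∈ Finset.Icc (m - Nb - Nc) Na, ∑ j ∈ Finset.Icc (m - Na - Nc) Nb,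
            ∑ k ∈ range T, ∑ l ∈ range T, ∑ s ∈ range T,
            (Ring.choose i k * (Ring.choose j l * (k.choose s : ℤ))) •
              (A i * (d^[k-s] (B j) * d^[s + l] (C (m - i + k - j + (l:ℤ))))) :=
          sum_congr rfl fun i _ => Finset.sum_comm
      _ = ∑ i ∈ Finset.Icc (m - Nb - Nc) Na, ∑ j ∈ Finset.Icc (m - Na - Nc) Nb,
            ∑ k ∈ range T, ∑ s ∈ range T, ∑ l ∈ range T,
            (Ring.choose i k * (Ring.choose j l * (k.choose s : ℤ))) •
              (A i * (d^[k-s] (B j) * d^[s + l] (C (m - i + k - j + (l:ℤ))))) :=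
          sum_congr rfl fun i _ => sum_congr rfl fun j _ => sum_congr rfl fun k _ =>
            Finset.sum_comm
      _ = ∑ i ∈ Finset.Icc (m - Nb - Nc) Na, ∑ j ∈ Finset.Icc (m - Na - Nc) Nb,
            ∑ k ∈ range T, ∑ s ∈ range T, ∑ c ∈ range T,
            (if s ≤ c then
              (Ring.choose i k * (Ring.choose j (c - s) * (k.choose s : ℤ))) •
                (A i * (d^[k-s] (B j) * d^[c] (C (m - i + k - j + ((c - s : ℕ):ℤ)))))
            else 0) := by
          refine sum_congr rfl fun i hi => sum_congr rfl fun j hj => sum_congr rfl fun k _ =>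
            sum_congr rfl fun s _ => ?_
          rw [Finset.mem_Icc] at hi hj
          have hstep := sum_shift (R := R) s T (fun c =>
            (Ring.choose i k * (Ring.choose j (c - s) * (k.choose s : ℤ))) •
              (A i * (d^[k-s] (B j) * d^[c] (C (m - i + k - j + ((c - s : ℕ):ℤ))))))
          simp only [Nat.add_sub_cancel_left] at hstep
          rw [hstep]
          refine sum_congr_support fun c hc => ?_
          have hsc : s ≤ c := by
            by_contra h
            exact hc (if_neg h)
          rw [if_pos hsc] at hc
          have hks : s ≤ k := by
            by_contra h
            refine hc ?_
            rw [Nat.choose_eq_zero_of_lt (by omega), Nat.cast_zero, mul_zero, mul_zero, zero_smul]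
          have hBj : B j ≠ 0 := fun h0 => hc (by rw [h0, it_zero hd, zero_mul, mul_zero, smul_zero])
          have hCv : C (m - i + (k:ℤ) - j + ((c - s : ℕ):ℤ)) ≠ 0 := fun h0 =>
            hc (by rw [h0, it_zero hd, mul_zero, mul_zero, smul_zero])
          have h1 : j ≤ Nb := by
            by_contra h
            exact hBj (hB j (by omega))
          have h2 : m - i + (k:ℤ) - j + ((c - s : ℕ):ℤ) ≤ Nc := by
            by_contra h
            exact hCv (hC _ (by omega))
          rw [mem_range, mem_range]
          constructor <;> omega
      _ = ∑ i ∈ Finset.Icc (m - Nb - Nc) Na, ∑ j ∈ Finset.Icc (m - Na - Nc) Nb,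
          ∑ a ∈ range T, ∑ c ∈ range T,
          (∑ k ∈ range T, if a ≤ k ∧ k - a ≤ c then
              Ring.choose i k * ((k.choose a : ℤ) * Ring.choose j (c - (k - a))) else 0) •
            (A i * d^[a] (B j) * d^[c] (C (m + a + c - i - j))) := by
          refine sum_congr rfl fun i _ => sum_congr rfl fun j _ => ?_
          have hpair : ∀ c : ℕ, (∑ k ∈ range T, ∑ s ∈ range T,
              (if s ≤ c then
                (Ring.choose i k * (Ring.choose j (c - s) * (k.choose s : ℤ))) •
                  (A i * (d^[k-s] (B j) * d^[c] (C (m - i + k - j + ((c - s : ℕ):ℤ)))))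
              else 0))
              = ∑ a ∈ range T, (∑ k ∈ range T, if a ≤ k ∧ k - a ≤ c then
                  Ring.choose i k * ((k.choose a : ℤ) * Ring.choose j (c - (k - a))) else 0) •
                (A i * d^[a] (B j) * d^[c] (C (m + a + c - i - j))) := by
            intro c
            calc (∑ k ∈ range T, ∑ s ∈ range T,
                (if s ≤ c then
                  (Ring.choose i k * (Ring.choose j (c - s) * (k.choose s : ℤ))) •
                    (A i * (d^[k-s] (B j) * d^[c] (C (m - i + k - j + ((c - s : ℕ):ℤ)))))
                else 0))
                = ∑ q ∈ range T ×ˢ range T,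
                  (if q.2 ≤ c then
                    (Ring.choose i q.1 * (Ring.choose j (c - q.2) * (q.1.choose q.2 : ℤ))) •
                      (A i * (d^[q.1-q.2] (B j) * d^[c] (C (m - i + q.1 - j + ((c - q.2 : ℕ):ℤ)))))
                  else 0) := (Finset.sum_product' _ _ _).symm
              _ = ∑ q ∈ (range T ×ˢ range T).filter (fun q => q.2 ≤ q.1),
                  (if q.2 ≤ c then
                    (Ring.choose i q.1 * (Ring.choose j (c - q.2) * (q.1.choose q.2 : ℤ))) •
                      (A i * (d^[q.1-q.2] (B j) * d^[c] (C (m - i + q.1 - j + ((c - q.2 : ℕ):ℤ)))))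
                  else 0) := by
                  refine (Finset.sum_subset (Finset.filter_subset _ _) fun q hq hnq => ?_).symm
                  rw [Finset.mem_filter, not_and] at hnq
                  have : q.1 < q.2 := by
                    have := hnq hq
                    omega
                  rw [Nat.choose_eq_zero_of_lt this, Nat.cast_zero, mul_zero, mul_zero, zero_smul]
                  split <;> rfl
              _ = ∑ q ∈ (range T ×ˢ range T).filter (fun q => q.2 ≤ q.1),
                  (if q.2 ≤ q.1 ∧ q.1 - q.2 ≤ c then
                    Ring.choose i q.1 * ((q.1.choose q.2 : ℤ) * Ring.choose j (c - (q.1 - q.2))) else 0) •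
                    (A i * d^[q.2] (B j) * d^[c] (C (m + q.2 + c - i - j))) := by
                  refine Finset.sum_nbij' (fun q => (q.1, q.1 - q.2)) (fun q => (q.1, q.1 - q.2))
                    ?_ ?_ ?_ ?_ ?_
                  · rintro ⟨k, s⟩ hq
                    rw [Finset.mem_filter, Finset.mem_product, mem_range, mem_range] at hq ⊢
                    dsimp only at hq ⊢
                    refine ⟨⟨hq.1.1, by omega⟩, by omega⟩
                  · rintro ⟨k, a⟩ hq
                    rw [Finset.mem_filter, Finset.mem_product, mem_range, mem_range] at hq ⊢
                    dsimp only at hq ⊢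
                    refine ⟨⟨hq.1.1, by omega⟩, by omega⟩
                  · rintro ⟨k, s⟩ hq
                    rw [Finset.mem_filter] at hq
                    dsimp only at hq ⊢
                    rw [Nat.sub_sub_self hq.2]
                  · rintro ⟨k, a⟩ hq
                    rw [Finset.mem_filter] at hq
                    dsimp only at hq ⊢
                    rw [Nat.sub_sub_self hq.2]
                  · rintro ⟨k, s⟩ hq
                    rw [Finset.mem_filter] at hq
                    have hsk : s ≤ k := hq.2
                    dsimp only
                    rw [Nat.sub_sub_self hsk, Nat.choose_symm hsk]
                    by_cases hsc : s ≤ c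
                    · rw [if_pos hsc, if_pos ⟨Nat.sub_le k s, hsc⟩]
                      have e : m + ((k - s : ℕ):ℤ) + (c:ℤ) - i - j
                          = m - i + (k:ℤ) - j + ((c - s : ℕ):ℤ) := by omega
                      rw [e]
                      congr 1
                      · ring
                      · ring
                    · rw [if_neg hsc, if_neg (fun h => hsc h.2), zero_smul]
              _ = ∑ q ∈ range T ×ˢ range T,
                  (if q.2 ≤ q.1 ∧ q.1 - q.2 ≤ c then
                    Ring.choose i q.1 * ((q.1.choose q.2 : ℤ) * Ring.choose j (c - (q.1 - q.2))) else 0) •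
                    (A i * d^[q.2] (B j) * d^[c] (C (m + q.2 + c - i - j))) := by
                  refine Finset.sum_subset (Finset.filter_subset _ _) fun q hq hnq => ?_
                  rw [Finset.mem_filter, not_and] at hnq
                  have : ¬ q.2 ≤ q.1 := hnq hq
                  rw [if_neg (fun h => this h.1), zero_smul]
              _ = ∑ k ∈ range T, ∑ a ∈ range T,
                  (if a ≤ k ∧ k - a ≤ c then
                    Ring.choose i k * ((k.choose a : ℤ) * Ring.choose j (c - (k - a))) else 0) •
                    (A i * d^[a] (B j) * d^[c] (C (m + a + c - i - j))) :=
                  Finset.sum_product' (f := fun k a =>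
                    (if a ≤ k ∧ k - a ≤ c then
                      Ring.choose i k * ((k.choose a : ℤ) * Ring.choose j (c - (k - a))) else 0) •
                      (A i * d^[a] (B j) * d^[c] (C (m + a + c - i - j)))) _ _
              _ = ∑ a ∈ range T, ∑ k ∈ range T,
                  (if a ≤ k ∧ k - a ≤ c then
                    Ring.choose i k * ((k.choose a : ℤ) * Ring.choose j (c - (k - a))) else 0) •
                    (A i * d^[a] (B j) * d^[c] (C (m + a + c - i - j))) := Finset.sum_comm
              _ = ∑ a ∈ range T, (∑ k ∈ range T, if a ≤ k ∧ k - a ≤ c then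
                    Ring.choose i k * ((k.choose a : ℤ) * Ring.choose j (c - (k - a))) else 0) •
                  (A i * d^[a] (B j) * d^[c] (C (m + a + c - i - j))) := by
                  refine sum_congr rfl fun a _ => ?_
                  rw [Finset.sum_smul]
          calc ∑ k ∈ range T, ∑ s ∈ range T, ∑ c ∈ range T,
              (if s ≤ c then
                (Ring.choose i k * (Ring.choose j (c - s) * (k.choose s : ℤ))) •
                  (A i * (d^[k-s] (B j) * d^[c] (C (m - i + k - j + ((c - s : ℕ):ℤ)))))
              else 0)
              = ∑ k ∈ range T, ∑ c ∈ range T, ∑ s ∈ range T,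
              (if s ≤ c then
                (Ring.choose i k * (Ring.choose j (c - s) * (k.choose s : ℤ))) •
                  (A i * (d^[k-s] (B j) * d^[c] (C (m - i + k - j + ((c - s : ℕ):ℤ)))))
              else 0) := sum_congr rfl fun k _ => Finset.sum_comm
            _ = ∑ c ∈ range T, ∑ k ∈ range T, ∑ s ∈ range T,
              (if s ≤ c then
                (Ring.choose i k * (Ring.choose j (c - s) * (k.choose s : ℤ))) •
                  (A i * (d^[k-s] (B j) * d^[c] (C (m - i + k - j + ((c - s : ℕ):ℤ)))))
              else 0) := Finset.sum_comm
            _ = ∑ c ∈ range T, ∑ a ∈ range T, (∑ k ∈ range T, if a ≤ k ∧ k - a ≤ c then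
                  Ring.choose i k * ((k.choose a : ℤ) * Ring.choose j (c - (k - a))) else 0) •
                (A i * d^[a] (B j) * d^[c] (C (m + a + c - i - j))) :=
                sum_congr rfl fun c _ => hpair c
            _ = ∑ a ∈ range T, ∑ c ∈ range T, (∑ k ∈ range T, if a ≤ k ∧ k - a ≤ c then
                  Ring.choose i k * ((k.choose a : ℤ) * Ring.choose j (c - (k - a))) else 0) •
                (A i * d^[a] (B j) * d^[c] (C (m + a + c - i - j))) := Finset.sum_comm
  -- CONCLUSION
  rw [hLHS, hRHS]
  refine sum_congr rfl fun i hi => sum_congr rfl fun j hj => sum_congr rfl fun a _ =>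
    sum_congr rfl fun c _ => ?_
  rw [Finset.mem_Icc] at hi hj
  by_cases hac : a + c < T
  · rw [key_identity i j a c hac]
  · have hCz : C (m + (a:ℤ) + (c:ℤ) - i - j) = 0 := hC _ (by omega)
    rw [hCz, it_zero hd, mul_zero, smul_zero, smul_zero]

end GDP

open GDP


open GD in
/-- the factorization `W_L = P₁(L) ∘ Θ_L` of Radul's map through the
second Adler–Gel'fand–Dickey Poisson tensor: for every differential operator `E` of
order ≤ n, with `X = Θ_L(E) = (EL^{-1})₋`,
`W_L(E) = LE - (LEL^{-1})₊L = L(XL)₊ - (LX)₊L = P₁(L)·X`. -/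
theorem radul_factorization {R : Type} [CommRing R] (d : R → R) (hd : GD.IsDeriv d)
    (n : ℕ) (hn : 0 < n) (u : ℕ → R)
    (L : PDO R)
    (hL : L = term 1 ((n : ℤ) + 1) - ∑ j ∈ Finset.range n, term (u j) (j : ℤ))
    (Linv : PDO R)
    (hinv1 : pmul d L Linv = GD.one) (hinv2 : pmul d Linv L = GD.one)
    (hord : ∀ i : ℤ, -((n : ℤ) + 1) < i → Linv i = 0)
    (E : PDO R)
    (hEdiff : ∀ m : ℤ, m < 0 → E m = 0)
    (hEord : ∀ m : ℤ, (n : ℤ) < m → E m = 0)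
    (X : PDO R)
    (hX : X = pmul d E Linv - GD.plus (pmul d E Linv)) :
    pmul d L E - pmul d (GD.plus (pmul d (pmul d L E) Linv)) L
      = pmul d L (GD.plus (pmul d X L)) - pmul d (GD.plus (pmul d L X)) L := by
  have hBL : Bdd L ((n : ℤ) + 1) := by
    intro i hi
    rw [hL]
    show term 1 ((n:ℤ)+1) i - (∑ j ∈ Finset.range n, term (u j) (j : ℤ)) i = 0
    rw [Finset.sum_apply]
    rw [show term (1:R) ((n:ℤ)+1) i = 0 from if_neg (by omega)]
    rw [Finset.sum_eq_zero fun j hj => by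
      rw [Finset.mem_range] at hj
      exact if_neg (by omega)]
    simp
  have hDL : Diff L := by
    intro m hm
    rw [hL]
    show term 1 ((n:ℤ)+1) m - (∑ j ∈ Finset.range n, term (u j) (j : ℤ)) m = 0
    rw [Finset.sum_apply]
    rw [show term (1:R) ((n:ℤ)+1) m = 0 from if_neg (by omega)]
    have hz : ∀ j ∈ Finset.range n, term (u j) (j:ℤ) m = 0 := fun j hj =>
      if_neg (by omega)
    rw [Finset.sum_eq_zero hz]
    simp
  have hBE : Bdd E (n : ℤ) := fun i hi => hEord i hi
  have hDE : Diff E := hEdiff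
  have hBLinv : Bdd Linv (-((n : ℤ) + 1)) := fun i hi => hord i hi
  have hBP : Bdd (pmul d E Linv) ((n:ℤ) + -((n:ℤ)+1)) := Bdd.pmul hd hBE hBLinv
  have hBplusP : Bdd (GD.plus (pmul d E Linv)) ((n:ℤ) + -((n:ℤ)+1)) := hBP.plus
  have h1 : pmul d (pmul d E Linv) L = E := by
    rw [pmul_assoc hd hBE hBLinv hBL, hinv2, pmul_one_right hd]
  have hXL : pmul d X L = E - pmul d (GD.plus (pmul d E Linv)) L := by
    rw [hX, pmul_sub_left hd hBP hBplusP hBL, h1]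
  have h2 : GD.plus (pmul d X L) = E - pmul d (GD.plus (pmul d E Linv)) L := by
    rw [hXL, plus_sub, plus_eq_self hDE,
      plus_eq_self (Diff.pmul hd (Diff.plus _) hDL)]
  have h3 : pmul d L (GD.plus (pmul d X L))
      = pmul d L E - pmul d L (pmul d (GD.plus (pmul d E Linv)) L) := by
    rw [h2, pmul_sub_right hd hBL (hBE.mono (by omega : (n:ℤ) ≤ (n:ℤ)+1))
      (((hBplusP.pmul hd hBL).mono (by omega)) : Bdd (pmul d (GD.plus (pmul d E Linv)) L) ((n:ℤ)+1))]
  have h4 : pmul d L X = pmul d L (pmul d E Linv) - pmul d L (GD.plus (pmul d E Linv)) := by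
    rw [hX, pmul_sub_right hd hBL hBP hBplusP]
  have h5 : pmul d L (pmul d E Linv) = pmul d (pmul d L E) Linv :=
    (pmul_assoc hd hBL hBE hBLinv).symm
  have h6 : GD.plus (pmul d L X)
      = GD.plus (pmul d (pmul d L E) Linv) - pmul d L (GD.plus (pmul d E Linv)) := by
    rw [h4, h5, plus_sub, plus_eq_self (Diff.pmul hd hDL (Diff.plus _))]
  have h7 : pmul d (GD.plus (pmul d L X)) L
      = pmul d (GD.plus (pmul d (pmul d L E) Linv)) L
        - pmul d (pmul d L (GD.plus (pmul d E Linv))) L := by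
    rw [h6, pmul_sub_left hd
      ((Bdd.plus (Bdd.pmul hd (Bdd.pmul hd hBL hBE) hBLinv)).mono (by omega : (n:ℤ)+1+(n:ℤ)+ -((n:ℤ)+1) ≤ 2*(n:ℤ)+2) :
        Bdd (GD.plus (pmul d (pmul d L E) Linv)) (2*(n:ℤ)+2))
      (((Bdd.pmul hd hBL hBplusP).mono (by omega)) : Bdd (pmul d L (GD.plus (pmul d E Linv))) (2*(n:ℤ)+2))
      hBL]
  have h8 : pmul d L (pmul d (GD.plus (pmul d E Linv)) L)
      = pmul d (pmul d L (GD.plus (pmul d E Linv))) L :=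
    (pmul_assoc hd hBL hBplusP hBL).symm
  rw [h3, h7, h8]
  abel
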